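/- Let G be a group, n ≥ 1, w ∈ FreeGroup (Fin n) with w ≠ 1, and D ≥ 1 such that G has iterational depth at most D with respect to w. Then G satisfies a non-trivial identity: there exist m ≥ 1 and v ∈ FreeGroup (Fin m) with v ≠ 1 such that FreeGroup.lift f v = 1 for every f : Fin m → G. -/

import Mathlib

noncomputable section

/-- The verbal map: evaluate `w` with the variable of index `0` set to `x`
and the variable of index `i` set to `f i` for `i ≠ 0`. -/
def verbalMap {n : ℕ} [NeZero n] {G : Type*} [Group G] (w : FreeGroup (Fin n))
    (f : Fin n → G) : G → G :=
  fun x => FreeGroup.lift (Function.update f 0 x) w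

/-- `w` is an E-type (Engel type) iterated identity of `G`. -/
def IsEIteratedIdentity {n : ℕ} [NeZero n] (w : FreeGroup (Fin n)) (G : Type*) [Group G] : Prop :=
  ∀ f : Fin n → G, ∃ d : ℕ, 1 ≤ d ∧ (verbalMap w f)^[d] (f 0) = 1

/-- `G` has iterational depth at most `D` with respect to `w`. -/
def DepthAtMost {n : ℕ} [NeZero n] (w : FreeGroup (Fin n)) (G : Type*) [Group G] (D : ℕ) : Prop :=
  ∀ f : Fin n → G, ∃ d : ℕ, 1 ≤ d ∧ d ≤ D ∧ (verbalMap w f)^[d] (f 0) = 1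

set_option linter.unusedSectionVars false
namespace NIBD

open FreeGroup List

variable {α : Type*} [DecidableEq α]

/-- non-cancelling adjacency -/
def rel (a b : α × Bool) : Prop := ¬(a.1 = b.1 ∧ a.2 = !b.2)

instance : DecidableRel (rel (α := α)) := fun _ _ => by unfold rel; infer_instance

def Reduced (L : List (α × Bool)) : Prop := List.Chain' rel L

theorem reduced_nil : Reduced ([] : List (α × Bool)) := List.isChain_nil

theorem reduced_singleton (a : α × Bool) : Reduced [a] := List.isChain_singleton a

theorem Reduced.reduce_eq {L : List (α × Bool)} (h : Reduced L) : FreeGroup.reduce L = L := by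
  induction L with
  | nil => rfl
  | cons x L ih =>
    have hL : Reduced L := h.tail
    rw [FreeGroup.reduce.cons, ih hL]
    cases L with
    | nil => rfl
    | cons y L' =>
      have hxy : rel x y := (List.isChain_cons_cons.mp h).1
      simp only [rel] at hxy
      simp [hxy]

theorem reduced_of_reduce_eq {L : List (α × Bool)} (h : FreeGroup.reduce L = L) : Reduced L := by
  induction L with
  | nil => exact List.isChain_nil
  | cons x L ih =>
    rw [FreeGroup.reduce.cons] at h
    rcases hr : FreeGroup.reduce L with - | ⟨y, L'⟩
    · rw [hr] at h
      simp only at h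
      have : L = [] := by
        have := congrArg List.tail h
        simpa using this.symm
      subst this
      exact reduced_singleton x
    · rw [hr] at h
      by_cases hc : x.1 = y.1 ∧ x.2 = !y.2
      · simp only [if_pos hc] at h
        exfalso
        have h1 : L'.length ≤ L.length - 1 := by
          have := FreeGroup.Red.length_le (FreeGroup.reduce.red (L := L))
          rw [hr] at this
          simp only [List.length_cons] at this; omega
        have h2 : L'.length = L.length + 1 := by rw [h]; simp
        omega
      · simp only [if_neg hc] at h
        have hL : L = y :: L' := by
          have := congrArg List.tail h
          simpa using this.symm
        have : FreeGroup.reduce L = L := by rw [hr, hL]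
        have hRL := ih this
        rw [hL]
        exact List.isChain_cons_cons.mpr ⟨hc, hL ▸ hRL⟩

theorem reduced_toWord (x : FreeGroup α) : Reduced x.toWord :=
  reduced_of_reduce_eq (FreeGroup.reduce_toWord x)

theorem toWord_mk_reduced {L : List (α × Bool)} (h : Reduced L) :
    (FreeGroup.mk L).toWord = L := by rw [FreeGroup.toWord_mk, h.reduce_eq]

theorem mk_ne_one {L : List (α × Bool)} (h : Reduced L) (hne : L ≠ []) :
    FreeGroup.mk L ≠ 1 := by
  intro h1
  have := toWord_mk_reduced h
  rw [h1, FreeGroup.toWord_one] at this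
  exact hne this.symm

theorem getLast?_cons_concat (a b : α × Bool) (L : List (α × Bool)) :
    (a :: (L ++ [b])).getLast? = some b := by
  rw [show a :: (L ++ [b]) = (a :: L) ++ [b] from rfl, List.getLast?_concat]

theorem reduced_append {L₁ L₂ : List (α × Bool)} :
    Reduced (L₁ ++ L₂) ↔ Reduced L₁ ∧ Reduced L₂ ∧
      ∀ x ∈ L₁.getLast?, ∀ y ∈ L₂.head?, rel x y := List.isChain_append

theorem reduced_invRev {L : List (α × Bool)} (h : Reduced L) : Reduced (FreeGroup.invRev L) := by
  unfold FreeGroup.invRev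
  rw [Reduced, List.Chain', List.isChain_reverse, List.isChain_map]
  refine List.IsChain.imp ?_ h
  rintro ⟨a, ab⟩ ⟨b, bb⟩ hab hc
  refine hab ⟨hc.1.symm, ?_⟩
  have h2 := hc.2
  cases ab <;> cases bb <;> simp_all

theorem invRev_append {L₁ L₂ : List (α × Bool)} :
    FreeGroup.invRev (L₁ ++ L₂) = FreeGroup.invRev L₂ ++ FreeGroup.invRev L₁ := by
  simp [FreeGroup.invRev]

theorem invRev_cons {a : α × Bool} {L : List (α × Bool)} :
    FreeGroup.invRev (a :: L) = FreeGroup.invRev L ++ [(a.1, !a.2)] := by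
  simp [FreeGroup.invRev]

theorem head?_invRev {L : List (α × Bool)} :
    (FreeGroup.invRev L).head? = L.getLast?.map (fun a => (a.1, !a.2)) := by
  unfold FreeGroup.invRev
  rw [List.head?_reverse, List.getLast?_map]

theorem getLast?_invRev {L : List (α × Bool)} :
    (FreeGroup.invRev L).getLast? = L.head?.map (fun a => (a.1, !a.2)) := by
  unfold FreeGroup.invRev
  rw [List.getLast?_reverse, List.head?_map]


theorem cyclic_decomp (N : ℕ) : ∀ (L : List (α × Bool)), L.length ≤ N → Reduced L → L ≠ [] →
    ∃ s ω, L = s ++ ω ++ FreeGroup.invRev s ∧ ω ≠ [] ∧ Reduced (ω ++ ω) := by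
  induction N with
  | zero =>
    intro L hlen _ hne
    exact absurd (List.length_eq_zero_iff.mp (Nat.le_zero.mp hlen)) hne
  | succ N ih =>
    intro L hlen hred hne
    by_cases hrel : rel (L.getLast hne) (L.head hne)
    · refine ⟨[], L, by simp [FreeGroup.invRev], hne, ?_⟩
      refine reduced_append.mpr ⟨hred, hred, ?_⟩
      intro x hx y hy
      rw [List.getLast?_eq_getLast hne, Option.mem_some_iff] at hx
      rw [List.head?_eq_head hne, Option.mem_some_iff] at hy
      rw [← hx, ← hy]
      exact hrel
    · unfold rel at hrel
      rw [not_not] at hrel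
      obtain ⟨a, T, rfl⟩ : ∃ a T, L = a :: T := by
        cases L with
        | nil => exact absurd rfl hne
        | cons a T => exact ⟨a, T, rfl⟩
      cases T with
      | nil =>
        simp only [List.getLast_singleton, List.head_cons] at hrel
        exact absurd hrel.2 (by simp)
      | cons c T' =>
        set T := c :: T' with hTdef
        have hTne : T ≠ [] := by simp [hTdef]
        have hT : T.dropLast ++ [T.getLast hTne] = T := List.dropLast_append_getLast hTne
        set tl := T.getLast hTne with htl
        set mid := T.dropLast with hmid
        have hgl : (a :: T).getLast (by simp) = tl := List.getLast_cons hTne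
        have hrel2 : tl = (a.1, !a.2) := by
          rw [List.head_cons] at hrel
          have h1 := hrel.1
          have h2 := hrel.2
          rw [hgl] at h1 h2
          exact Prod.ext h1 h2
        have hLT : a :: T = (a :: mid) ++ [tl] := by
          rw [hmid, htl]
          simp [hT]; exact (List.dropLast_append_getLast hTne).symm
        have hmidne : mid ≠ [] := by
          intro hm
          rw [hm] at hLT
          have hred2 : Reduced ([a] ++ [tl]) := hLT ▸ hred
          have hr := (List.isChain_cons_cons.mp hred2).1
          unfold rel at hr
          apply hr
          rw [hrel2]
          exact ⟨rfl, by simp⟩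
        have hmidred : Reduced mid := by
          refine List.IsChain.infix hred ⟨[a], [tl], ?_⟩
          rw [hLT]; simp
        have hmidlen : mid.length ≤ N := by
          have h1 := congrArg List.length hLT
          simp at h1
          simp only [List.length_cons] at hlen
          omega
        obtain ⟨s', ω, hdec, hωne, hωred⟩ := ih mid hmidlen hmidred hmidne
        refine ⟨a :: s', ω, ?_, hωne, hωred⟩
        rw [invRev_cons, hLT, hdec, ← hrel2]
        simp

section Core

variable (z : α)

def tau (t : FreeGroup α) : FreeGroup α →* FreeGroup α :=
  FreeGroup.lift (Function.update FreeGroup.of z t)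

theorem tau_of_self (t : FreeGroup α) : tau z t (FreeGroup.of z) = t := by
  simp [tau]

theorem tau_of_ne (t : FreeGroup α) {i : α} (h : i ≠ z) :
    tau z t (FreeGroup.of i) = FreeGroup.of i := by
  simp [tau, Function.update_of_ne h]

theorem mk_single_true (i : α) : FreeGroup.mk [(i, true)] = FreeGroup.of i := rfl

theorem mk_single_false (i : α) : FreeGroup.mk [(i, false)] = (FreeGroup.of i)⁻¹ := by
  rw [← mk_single_true i, FreeGroup.inv_mk]
  simp [FreeGroup.invRev]

theorem mk_cons (l : α × Bool) (L : List (α × Bool)) :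
    FreeGroup.mk (l :: L) = FreeGroup.mk [l] * FreeGroup.mk L := by
  rw [FreeGroup.mul_mk]; rfl

theorem tau_fix_single (t : FreeGroup α) {l : α × Bool} (h : l.1 ≠ z) :
    tau z t (FreeGroup.mk [l]) = FreeGroup.mk [l] := by
  obtain ⟨i, b⟩ := l
  simp only at h
  cases b
  · rw [mk_single_false, _root_.map_inv, tau_of_ne z t h]
  · rw [mk_single_true, tau_of_ne z t h]

theorem tau_fix (t : FreeGroup α) : ∀ (L : List (α × Bool)), (∀ l ∈ L, l.1 ≠ z) →
    tau z t (FreeGroup.mk L) = FreeGroup.mk L := by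
  intro L
  induction L with
  | nil => intro _; rw [← FreeGroup.one_eq_mk, _root_.map_one]
  | cons l L ih =>
    intro h
    rw [mk_cons, _root_.map_mul, ih (fun x hx => h x (List.mem_cons_of_mem l hx)),
      tau_fix_single z t (h l (List.mem_cons_self))]

theorem mk_cancel (A B C : List (α × Bool)) :
    FreeGroup.mk (A ++ FreeGroup.invRev B) * FreeGroup.mk (B ++ C) = FreeGroup.mk (A ++ C) := by
  rw [← FreeGroup.mul_mk, ← FreeGroup.mul_mk, ← FreeGroup.mul_mk, ← FreeGroup.inv_mk]
  group

theorem invRev_ne_nil {L : List (α × Bool)} (h : L ≠ []) : FreeGroup.invRev L ≠ [] := by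
  simp [FreeGroup.invRev, h]

variable (s ω : List (α × Bool))

def wpart (b : Bool) : List (α × Bool) := if b then ω else FreeGroup.invRev ω

def Mb (b : Bool) : List (α × Bool) := s ++ wpart ω b ++ FreeGroup.invRev s

def shp (l : α × Bool) : List (α × Bool) := if l.1 = z then s ++ wpart ω l.2 else [l]

theorem Mb_false_eq : Mb s ω false = FreeGroup.invRev (Mb s ω true) := by
  simp [Mb, wpart, invRev_append, FreeGroup.invRev_invRev, List.append_assoc]

theorem wpart_ne (hω : ω ≠ []) (b : Bool) : wpart ω b ≠ [] := by
  cases b <;> simp [wpart, hω, invRev_ne_nil]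

theorem sw_ne (hω : ω ≠ []) (b : Bool) : s ++ wpart ω b ≠ [] := by
  intro h
  exact wpart_ne ω hω b (List.append_eq_nil_iff.mp h).2

theorem red_ww (hωω : Reduced (ω ++ ω)) (b : Bool) : Reduced (wpart ω b ++ wpart ω b) := by
  cases b
  · simpa [wpart, invRev_append] using reduced_invRev hωω
  · simpa [wpart] using hωω

theorem red_Mb (hM : Reduced (Mb s ω true)) (b : Bool) : Reduced (Mb s ω b) := by
  cases b
  · rw [Mb_false_eq]; exact reduced_invRev hM
  · exact hM

theorem hd_Mb (hhd : ∀ x ∈ (Mb s ω true).head?, x.1 = z)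
    (hlt : ∀ x ∈ (Mb s ω true).getLast?, x.1 = z) (b : Bool) :
    ∀ x ∈ (Mb s ω b).head?, x.1 = z := by
  cases b
  · intro x hx
    rw [Mb_false_eq, head?_invRev, Option.mem_def, Option.map_eq_some_iff] at hx
    obtain ⟨y, hy, rfl⟩ := hx
    exact hlt y hy
  · exact hhd

theorem lt_Mb (hhd : ∀ x ∈ (Mb s ω true).head?, x.1 = z)
    (hlt : ∀ x ∈ (Mb s ω true).getLast?, x.1 = z) (b : Bool) :
    ∀ x ∈ (Mb s ω b).getLast?, x.1 = z := by
  cases b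
  · intro x hx
    rw [Mb_false_eq, getLast?_invRev, Option.mem_def, Option.map_eq_some_iff] at hx
    obtain ⟨y, hy, rfl⟩ := hx
    exact hhd y hy
  · exact hlt

theorem head?_Mb (hω : ω ≠ []) (b : Bool) :
    (Mb s ω b).head? = (s ++ wpart ω b).head? := by
  have hMbeq : Mb s ω b = (s ++ wpart ω b) ++ FreeGroup.invRev s := rfl
  rw [hMbeq, List.head?_append_of_ne_nil _ (sw_ne s ω hω b)]

theorem hd_sw (hω : ω ≠ []) (hhd : ∀ x ∈ (Mb s ω true).head?, x.1 = z)
    (hlt : ∀ x ∈ (Mb s ω true).getLast?, x.1 = z) (b : Bool) :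
    ∀ x ∈ (s ++ wpart ω b).head?, x.1 = z := by
  intro x hx
  exact hd_Mb z s ω hhd hlt b x (by rw [head?_Mb s ω hω b]; exact hx)

theorem tau_single_z (b : Bool) :
    tau z (FreeGroup.mk (Mb s ω true)) (FreeGroup.mk [(z, b)]) = FreeGroup.mk (Mb s ω b) := by
  cases b
  · rw [mk_single_false, _root_.map_inv, tau_of_self, FreeGroup.inv_mk, Mb_false_eq]
  · rw [mk_single_true, tau_of_self]

theorem peel (z : α) (s ω : List (α × Bool)) (hω : ω ≠ [])
    (hM : Reduced (Mb s ω true)) (hωω : Reduced (ω ++ ω))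
    (hhd : ∀ x ∈ (Mb s ω true).head?, x.1 = z)
    (hlt : ∀ x ∈ (Mb s ω true).getLast?, x.1 = z) :
    ∀ (U : List (α × Bool)) (l : α × Bool), Reduced (l :: U) →
      ∃ R, tau z (FreeGroup.mk (Mb s ω true)) (FreeGroup.mk (l :: U)) =
          FreeGroup.mk (shp z s ω l ++ R) ∧ Reduced (shp z s ω l ++ R) := by
  intro U
  induction U with
  | nil =>
    intro l _
    obtain ⟨i, b⟩ := l
    by_cases hz : i = z
    · have hz2 : z = i := hz.symm
      subst hz2
      refine ⟨FreeGroup.invRev s, ?_, ?_⟩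
      · rw [tau_single_z]
        congr 1
        simp [shp, Mb, List.append_assoc]
      · have e : shp z s ω (z, b) ++ FreeGroup.invRev s = Mb s ω b := by
          simp [shp, Mb, List.append_assoc]
        rw [e]
        exact red_Mb s ω hM b
    · refine ⟨[], ?_, ?_⟩
      · rw [tau_fix_single z _ (by simpa using hz)]
        congr 1
        simp [shp, hz]
      · have e : shp z s ω (i, b) ++ ([] : List (α × Bool)) = [(i, b)] := by simp [shp, hz]
        rw [e]
        exact reduced_singleton _
  | cons l' U'' ih =>
    intro l hred
    have hrel : rel l l' := (List.isChain_cons_cons.mp hred).1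
    have hred' : Reduced (l' :: U'') := (List.isChain_cons_cons.mp hred).2
    obtain ⟨R', heq, hR⟩ := ih l' hred'
    have hsplit : tau z (FreeGroup.mk (Mb s ω true)) (FreeGroup.mk (l :: l' :: U'')) =
        tau z (FreeGroup.mk (Mb s ω true)) (FreeGroup.mk [l]) *
          FreeGroup.mk (shp z s ω l' ++ R') := by
      rw [mk_cons, _root_.map_mul, heq]
    by_cases hz : l.1 = z
    · obtain ⟨i, b⟩ := l
      simp only at hz
      have hz2 : z = i := hz.symm
      subst hz2
      rw [tau_single_z] at hsplit
      by_cases hz' : l'.1 = z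
      · -- case B : merge powers
        obtain ⟨i', b'⟩ := l'
        simp only at hz'
        have hz2' : z = i' := hz'.symm
        subst hz2'
        have hb : b' = b := by
          by_contra hbb
          refine hrel ⟨rfl, ?_⟩
          simp only
          cases b <;> cases b' <;> simp_all
        subst hb
        refine ⟨wpart ω b' ++ R', ?_, ?_⟩
        · rw [hsplit]
          have e1 : shp z s ω (z, b') ++ R' = s ++ (wpart ω b' ++ R') := by
            simp [shp, List.append_assoc]
          have e2 : Mb s ω b' = (s ++ wpart ω b') ++ FreeGroup.invRev s := rfl
          rw [e1, e2, mk_cancel]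
          congr 1
          simp [shp, List.append_assoc]
        · have hshp : shp z s ω (z, b') = s ++ wpart ω b' := by simp [shp]
          rw [hshp] at hR ⊢
          have e3 : (s ++ wpart ω b') ++ (wpart ω b' ++ R') =
              s ++ (wpart ω b' ++ (wpart ω b' ++ R')) := by simp [List.append_assoc]
          obtain ⟨hS, hjR⟩ := List.isChain_append.mp hR
          have hww := List.isChain_append.mp (red_ww ω hωω b')
          refine List.isChain_append.mpr ⟨hS, ?_, ?_⟩
          · refine List.isChain_append.mpr ⟨hww.1, hjR.1, ?_⟩
            intro x hx y hy
            refine hjR.2 x ?_ y hy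
            rw [List.getLast?_append_of_ne_nil _ (wpart_ne ω hω b')]
            exact hx
          · intro x hx y hy
            rw [List.getLast?_append_of_ne_nil _ (wpart_ne ω hω b')] at hx
            rw [List.head?_append_of_ne_nil _ (wpart_ne ω hω b')] at hy
            exact hww.2.2 x hx y hy
      · -- case C : z-letter followed by non-z letter
        refine ⟨FreeGroup.invRev s ++ (shp z s ω l' ++ R'), ?_, ?_⟩
        · rw [hsplit, FreeGroup.mul_mk]
          congr 1
          simp [shp, Mb, List.append_assoc]
        · have e : shp z s ω (z, b) ++ (FreeGroup.invRev s ++ (shp z s ω l' ++ R')) =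
              Mb s ω b ++ (shp z s ω l' ++ R') := by
            simp [shp, Mb, List.append_assoc]
          rw [e]
          refine reduced_append.mpr ⟨red_Mb s ω hM b, hR, ?_⟩
          intro x hx y hy
          have hxz : x.1 = z := lt_Mb z s ω hhd hlt b x hx
          have e2 : shp z s ω l' = [l'] := by simp [shp, hz']
          rw [e2] at hy
          have hyl : y = l' := by
            have e3 : (([l'] : List (α × Bool)) ++ R').head? = some l' := rfl
            rw [e3, Option.mem_some_iff] at hy
            exact hy.symm
          subst hyl
          intro hc
          exact hz' (by rw [← hc.1]; exact hxz)
    · -- case A : non-z letter in front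
      refine ⟨shp z s ω l' ++ R', ?_, ?_⟩
      · rw [hsplit, tau_fix_single z _ hz, FreeGroup.mul_mk]
        congr 1
        simp [shp, hz]
      · have e : shp z s ω l ++ (shp z s ω l' ++ R') = [l] ++ (shp z s ω l' ++ R') := by
          simp [shp, hz]
        rw [e]
        refine reduced_append.mpr ⟨reduced_singleton l, hR, ?_⟩
        intro x hx y hy
        have hxl : x = l := by
          have e3 : ([l] : List (α × Bool)).getLast? = some l := rfl
          rw [e3, Option.mem_some_iff] at hx
          exact hx.symm
        subst hxl
        by_cases hz' : l'.1 = z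
        · have e2 : shp z s ω l' = s ++ wpart ω l'.2 := by simp [shp, hz']
          rw [e2, List.head?_append_of_ne_nil _ (sw_ne s ω hω l'.2)] at hy
          have hyz : y.1 = z := hd_sw z s ω hω hhd hlt l'.2 y hy
          intro hc
          exact hz (by rw [hc.1, hyz])
        · have e2 : shp z s ω l' = [l'] := by simp [shp, hz']
          rw [e2] at hy
          have hyl : y = l' := by
            have e3 : (([l'] : List (α × Bool)) ++ R').head? = some l' := rfl
            rw [e3, Option.mem_some_iff] at hy
            exact hy.symm
          subst hyl
          exact hrel

theorem tau_core_ne_one (z : α) (M : List (α × Bool)) (hM : Reduced M) (hne : M ≠ [])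
    (hhd : ∀ x ∈ M.head?, x.1 = z) (hlt : ∀ x ∈ M.getLast?, x.1 = z) :
    ∀ u : FreeGroup α, u ≠ 1 → tau z (FreeGroup.mk M) u ≠ 1 := by
  obtain ⟨s, ω, hdec, hω, hωω⟩ := cyclic_decomp M.length M le_rfl hM hne
  have hMb : Mb s ω true = M := by rw [hdec]; simp [Mb, wpart]
  intro u hu
  have hU : u.toWord ≠ [] := fun h => hu (FreeGroup.toWord_eq_nil_iff.mp h)
  obtain ⟨l, U, hLU⟩ : ∃ l U, u.toWord = l :: U := by
    cases hUw : u.toWord with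
    | nil => exact absurd hUw hU
    | cons l U => exact ⟨l, U, rfl⟩
  have hredU : Reduced (l :: U) := hLU ▸ reduced_toWord u
  rw [← hMb] at hM hhd hlt ⊢
  obtain ⟨R, heq, hredR⟩ := peel z s ω hω hM hωω hhd hlt U l hredU
  have hfin : tau z (FreeGroup.mk (Mb s ω true)) u = FreeGroup.mk (shp z s ω l ++ R) := by
    conv_lhs => rw [← FreeGroup.mk_toWord (x := u), hLU]
    exact heq
  rw [hfin]
  apply mk_ne_one hredR
  have hshpne : shp z s ω l ≠ [] := by
    unfold shp
    split
    · exact sw_ne s ω hω l.2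
    · simp
  intro hnil
  exact hshpne (List.append_eq_nil_iff.mp hnil).1

theorem mem_invRev' {L : List (α × Bool)} {x : α × Bool} (hx : x ∈ L) :
    (x.1, !x.2) ∈ FreeGroup.invRev L := by
  unfold FreeGroup.invRev
  rw [List.mem_reverse, List.mem_map]
  exact ⟨x, hx, rfl⟩

theorem mem_invRev {L : List (α × Bool)} {x : α × Bool} (hx : x ∈ FreeGroup.invRev L) :
    (x.1, !x.2) ∈ L := by
  unfold FreeGroup.invRev at hx
  rw [List.mem_reverse, List.mem_map] at hx
  obtain ⟨y, hy, rfl⟩ := hx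
  simpa using hy

theorem tau_iterate_ne_one (z : α) (w : FreeGroup α) (hw : w ≠ 1) :
    ∀ d, 1 ≤ d → (⇑(tau z w))^[d] (FreeGroup.of z) ≠ 1 := by
  intro d hd
  obtain ⟨k, rfl⟩ : ∃ k, d = k + 1 := ⟨d - 1, by omega⟩
  rw [Function.iterate_succ_apply, tau_of_self]
  by_cases hall : ∀ l ∈ w.toWord, l.1 ≠ z
  · have hfix : tau z w w = w := by
      conv_lhs => rw [← FreeGroup.mk_toWord (x := w)]
      rw [tau_fix z _ _ hall, FreeGroup.mk_toWord]
    have hiter : ∀ k, (⇑(tau z w))^[k] w = w := by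
      intro k
      induction k with
      | zero => rfl
      | succ k ih => rw [Function.iterate_succ_apply', ih, hfix]
    rw [hiter k]
    exact hw
  · push_neg at hall
    obtain ⟨l0, hl0mem, hl0z⟩ := hall
    set p : (α × Bool) → Bool := fun l => decide (l.1 ≠ z) with hp
    set L := w.toWord with hLdef
    have hLred : Reduced L := reduced_toWord w
    set P := L.takeWhile p with hP
    set R0 := L.dropWhile p with hR0
    have hLPR : P ++ R0 = L := List.takeWhile_append_dropWhile
    have hR0ne : R0 ≠ [] := by
      intro h
      rw [hR0, List.dropWhile_eq_nil_iff] at h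
      have h2 := h l0 hl0mem
      rw [hp] at h2
      simp only [decide_eq_true_eq] at h2
      exact h2 hl0z
    have hR0hd : ∀ x ∈ R0.head?, x.1 = z := by
      intro x hx
      rw [List.head?_eq_head hR0ne, Option.mem_some_iff] at hx
      have h2 := List.head_dropWhile_not p (l := L) (by rw [← hR0]; exact hR0ne)
      have h3 : R0.head hR0ne = (L.dropWhile p).head (by rw [← hR0]; exact hR0ne) := by
        congr 1 <;> rw [hR0]
      rw [← h3] at h2
      rw [hx] at h2
      rw [hp] at h2
      simp only [decide_eq_false_iff_not, not_not] at h2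
      exact h2
    set Q0 := (FreeGroup.invRev R0).takeWhile p with hQ0
    set M0 := (FreeGroup.invRev R0).dropWhile p with hM0
    have hQM : Q0 ++ M0 = FreeGroup.invRev R0 := List.takeWhile_append_dropWhile
    have hM0ne : M0 ≠ [] := by
      intro h
      rw [hM0, List.dropWhile_eq_nil_iff] at h
      obtain ⟨r0, hr0⟩ : ∃ r0, r0 ∈ R0.head? := by
        rw [List.head?_eq_head hR0ne]
        exact ⟨_, rfl⟩
      have hr0m : r0 ∈ R0 := List.mem_of_mem_head? hr0
      have h2 := h _ (mem_invRev' hr0m)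
      rw [hp] at h2
      simp only [decide_eq_true_eq] at h2
      exact h2 (hR0hd r0 hr0)
    have hM0hd : ∀ x ∈ M0.head?, x.1 = z := by
      intro x hx
      rw [List.head?_eq_head hM0ne, Option.mem_some_iff] at hx
      have h2 := List.head_dropWhile_not p (l := FreeGroup.invRev R0)
        (by rw [← hM0]; exact hM0ne)
      have h3 : M0.head hM0ne = ((FreeGroup.invRev R0).dropWhile p).head
          (by rw [← hM0]; exact hM0ne) := by
        congr 1 <;> rw [hM0]
      rw [← h3] at h2
      rw [hx] at h2
      rw [hp] at h2
      simp only [decide_eq_false_iff_not, not_not] at h2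
      exact h2
    set M := FreeGroup.invRev M0 with hMdef
    set Q := FreeGroup.invRev Q0 with hQdef
    have hRMQ : R0 = M ++ Q := by
      conv_lhs => rw [← FreeGroup.invRev_invRev (L₁ := R0)]
      rw [← hQM, invRev_append]
    have hMne : M ≠ [] := invRev_ne_nil hM0ne
    have hMlast : ∀ x ∈ M.getLast?, x.1 = z := by
      intro x hx
      rw [hMdef, getLast?_invRev, Option.mem_def, Option.map_eq_some_iff] at hx
      obtain ⟨y, hy, rfl⟩ := hx
      exact hM0hd y hy
    have hMhd : ∀ x ∈ M.head?, x.1 = z := by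
      intro x hx
      apply hR0hd x
      rw [hRMQ, List.head?_append_of_ne_nil _ hMne]
      exact hx
    have hMred : Reduced M := by
      refine List.IsChain.infix hLred ⟨P, Q, ?_⟩
      rw [List.append_assoc, ← hRMQ, hLPR]
    have hPletters : ∀ x ∈ P, x.1 ≠ z := by
      intro x hx
      have := List.mem_takeWhile_imp hx
      rw [hp] at this
      simpa using this
    have hQletters : ∀ x ∈ Q, x.1 ≠ z := by
      intro x hx
      have h2 := mem_invRev (hQdef ▸ hx)
      have := List.mem_takeWhile_imp h2
      rw [hp] at this
      simpa using this
    set ww := FreeGroup.mk M with hww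
    set A := tau z (FreeGroup.mk P * FreeGroup.of z * FreeGroup.mk Q) with hA
    set B := tau z ((FreeGroup.mk P)⁻¹ * FreeGroup.of z * (FreeGroup.mk Q)⁻¹) with hB
    have hBA : ∀ u, B (A u) = u := by
      have hcomp : B.comp A = MonoidHom.id (FreeGroup α) := by
        apply FreeGroup.ext_hom
        intro a
        by_cases ha : a = z
        · have ha2 : z = a := ha.symm
          subst ha2
          simp only [MonoidHom.comp_apply, MonoidHom.id_apply]
          rw [hA, hB, tau_of_self, _root_.map_mul, _root_.map_mul, tau_of_self,
            tau_fix z _ P hPletters, tau_fix z _ Q hQletters]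
          group
        · simp only [MonoidHom.comp_apply, MonoidHom.id_apply]
          rw [hA, hB, tau_of_ne _ _ ha, tau_of_ne _ _ ha]
      intro u
      have := DFunLike.congr_fun hcomp u
      simpa using this
    have hcomp : (tau z ww).comp A = tau z w := by
      apply FreeGroup.ext_hom
      intro a
      by_cases ha : a = z
      · have ha2 : z = a := ha.symm
        subst ha2
        simp only [MonoidHom.comp_apply]
        rw [hA, tau_of_self, tau_of_self, _root_.map_mul, _root_.map_mul, tau_of_self,
          tau_fix z _ P hPletters, tau_fix z _ Q hQletters, hww,
          FreeGroup.mul_mk, FreeGroup.mul_mk, List.append_assoc, ← hRMQ, hLPR, hLdef,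
          FreeGroup.mk_toWord]
      · simp only [MonoidHom.comp_apply]
        rw [hA, tau_of_ne _ _ ha, tau_of_ne _ _ ha, tau_of_ne _ _ ha]
    have hinj : ∀ u, tau z w u = 1 → u = 1 := by
      intro u h1
      rw [← hcomp] at h1
      simp only [MonoidHom.comp_apply] at h1
      by_contra hu
      have hAu : A u ≠ 1 := by
        intro h3
        apply hu
        rw [← hBA u, h3, _root_.map_one]
      exact tau_core_ne_one z M hMred hMne hMhd hMlast (A u) hAu h1
    have hiter : ∀ k, (⇑(tau z w))^[k] w ≠ 1 := by
      intro k
      induction k with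
      | zero => simpa using hw
      | succ k ih =>
        rw [Function.iterate_succ_apply']
        intro h1
        exact ih (hinj _ h1)
    exact hiter k

end Core

theorem rel_of_fst_ne {a b : α × Bool} (h : a.1 ≠ b.1) : rel a b := fun hc => h hc.1

end NIBD

namespace NIBD

section Iterate

variable {n : ℕ} [NeZero n]

open scoped commutatorElement

theorem lift_iterate {G : Type*} [Group G] (w : FreeGroup (Fin n)) (d : ℕ) :
    ∀ (f : Fin n → G),
      FreeGroup.lift f ((⇑(tau (0 : Fin n) w))^[d] (FreeGroup.of 0)) =
        (verbalMap w f)^[d] (f 0) := by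
  induction d with
  | zero =>
    intro f
    simp [FreeGroup.lift_apply_of]
  | succ d ih =>
    intro f
    have key : (FreeGroup.lift f).comp (tau (0 : Fin n) w) =
        FreeGroup.lift (Function.update f 0 (FreeGroup.lift f w)) := by
      apply FreeGroup.ext_hom
      intro a
      by_cases ha : a = 0
      · subst ha
        simp only [MonoidHom.comp_apply]
        rw [tau_of_self, FreeGroup.lift_apply_of, Function.update_self]
      · simp only [MonoidHom.comp_apply]
        rw [tau_of_ne _ _ ha, FreeGroup.lift_apply_of, FreeGroup.lift_apply_of, Function.update_of_ne ha]
    rw [Function.iterate_succ_apply']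
    have h1 : FreeGroup.lift f (tau (0 : Fin n) w ((⇑(tau (0 : Fin n) w))^[d] (FreeGroup.of 0))) =
        FreeGroup.lift (Function.update f 0 (FreeGroup.lift f w))
          ((⇑(tau (0 : Fin n) w))^[d] (FreeGroup.of 0)) := by
      rw [← key]
      rfl
    rw [h1, ih]
    have h2 : verbalMap w (Function.update f 0 (FreeGroup.lift f w)) = verbalMap w f := by
      funext x
      unfold verbalMap
      rw [Function.update_idem]
    have h3 : Function.update f 0 (FreeGroup.lift f w) 0 = FreeGroup.lift f w :=
      Function.update_self _ _ _
    rw [h2, h3, Function.iterate_succ_apply]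
    congr 1
    unfold verbalMap
    rw [Function.update_eq_self]

/-- The iterated words. -/
def Wd (w : FreeGroup (Fin n)) (d : ℕ) : FreeGroup (Fin n) :=
  (⇑(tau (0 : Fin n) w))^[d] (FreeGroup.of 0)

theorem Wd_ne_one (w : FreeGroup (Fin n)) (hw : w ≠ 1) (d : ℕ) (hd : 1 ≤ d) :
    Wd w d ≠ 1 :=
  tau_iterate_ne_one 0 w hw d hd

variable (D : ℕ)

def emb : FreeGroup (Fin n) →* FreeGroup (Fin (n + D)) := FreeGroup.map (Fin.castAdd D)

theorem emb_toWord (x : FreeGroup (Fin n)) :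
    (emb (n := n) D x).toWord = x.toWord.map (fun l => (Fin.castAdd D l.1, l.2)) := by
  have h1 : emb (n := n) D x = FreeGroup.mk (x.toWord.map fun l => (Fin.castAdd D l.1, l.2)) := by
    conv_lhs => rw [← FreeGroup.mk_toWord (x := x)]
    exact FreeGroup.map.mk
  rw [h1]
  apply toWord_mk_reduced
  refine List.isChain_map_of_isChain _ ?_ (reduced_toWord x)
  intro a b hab hc
  apply hab
  refine ⟨?_, hc.2⟩
  have := congrArg Fin.val hc.1
  simp only [Fin.coe_castAdd] at this
  exact Fin.ext this

theorem emb_letters (x : FreeGroup (Fin n)) : ∀ l ∈ (emb (n := n) D x).toWord, (l.1 : ℕ) < n := by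
  intro l hl
  rw [emb_toWord] at hl
  obtain ⟨y, hy, rfl⟩ := List.mem_map.mp hl
  simpa using y.1.isLt

theorem lift_emb {G : Type*} [Group G] (f : Fin (n + D) → G) (x : FreeGroup (Fin n)) :
    FreeGroup.lift f (emb (n := n) D x) = FreeGroup.lift (f ∘ Fin.castAdd D) x := by
  have hc : (FreeGroup.lift f).comp (emb (n := n) D) = FreeGroup.lift (f ∘ Fin.castAdd D) := by
    apply FreeGroup.ext_hom
    intro a
    simp only [MonoidHom.comp_apply, emb, FreeGroup.map.of, FreeGroup.lift_apply_of]
    rfl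
  have := DFunLike.congr_fun hc x
  simpa using this

def tt (hD : 1 ≤ D) (d : ℕ) : Fin (n + D) := ⟨n + (d - 1) % D, Nat.add_lt_add_left (Nat.mod_lt _ hD) n⟩

theorem tt_val (hD : 1 ≤ D) (d : ℕ) : n ≤ (tt (n := n) D hD d : ℕ) := by simp [tt]

theorem tt_inj (hD : 1 ≤ D) {a b : ℕ} (ha : 1 ≤ a) (ha' : a ≤ D) (hb : 1 ≤ b) (hb' : b ≤ D)
    (hne : a ≠ b) : tt (n := n) D hD a ≠ tt (n := n) D hD b := by
  intro h
  have h2 := congrArg Fin.val h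
  simp only [tt] at h2
  rw [Nat.mod_eq_of_lt (by omega), Nat.mod_eq_of_lt (by omega)] at h2
  omega

variable (hD : 1 ≤ D) (w : FreeGroup (Fin n))

def ugadget (d : ℕ) : FreeGroup (Fin (n + D)) :=
  FreeGroup.of (tt D hD d) * emb D (Wd w d) * (FreeGroup.of (tt D hD d))⁻¹

theorem ugadget_toWord (d : ℕ) (hne : Wd w d ≠ 1) :
    (ugadget D hD w d).toWord =
      ((tt (n := n) D hD d, true) :: (emb D (Wd w d)).toWord) ++ [(tt (n := n) D hD d, false)] := by
  set t := tt (n := n) D hD d with htdef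
  set LA := (emb D (Wd w d)).toWord with hLA
  have hLAne : LA ≠ [] := by
    rw [hLA, Ne, FreeGroup.toWord_eq_nil_iff]
    intro h1
    apply hne
    rw [← FreeGroup.toWord_eq_nil_iff]
    have := congrArg FreeGroup.toWord h1
    rw [emb_toWord, FreeGroup.toWord_one] at this
    exact List.map_eq_nil_iff.mp this
  have hLAred : Reduced LA := hLA ▸ reduced_toWord _
  have hmk : ugadget D hD w d = FreeGroup.mk ((t, true) :: (LA ++ [(t, false)])) := by
    unfold ugadget
    rw [← htdef, ← FreeGroup.mk_toWord (x := emb D (Wd w d)), ← hLA]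
    rw [show FreeGroup.of t = FreeGroup.mk [(t, true)] from rfl]
    rw [FreeGroup.inv_mk]
    rw [FreeGroup.mul_mk, FreeGroup.mul_mk]
    congr 1
  have hred : Reduced ((t, true) :: (LA ++ [(t, false)])) := by
    refine List.isChain_cons.mpr ⟨?_, ?_⟩
    · intro y hy
      rw [List.head?_append_of_ne_nil _ hLAne] at hy
      apply rel_of_fst_ne
      intro hc
      have h1 : (y.1 : ℕ) < n := emb_letters D _ y (by rw [← hLA]; exact List.mem_of_mem_head? hy)
      have h2 := tt_val (n := n) D hD d
      rw [← htdef] at h2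
      have h3 : (t : ℕ) = (y.1 : ℕ) := congrArg Fin.val hc
      omega
    · refine reduced_append.mpr ⟨hLAred, reduced_singleton _, ?_⟩
      intro x hx y hy
      apply rel_of_fst_ne
      intro hc
      have h1 : (x.1 : ℕ) < n := emb_letters D _ x (by rw [← hLA]; exact List.mem_of_mem_getLast? hx)
      have h2 := tt_val (n := n) D hD d
      rw [← htdef] at h2
      have hy2 : y = (t, false) := by have := hy; simp only [List.head?_cons, Option.mem_some_iff] at this; exact this.symm
      have h3 : (x.1 : ℕ) = (t : ℕ) := by rw [hc, hy2]
      omega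
  rw [hmk, toWord_mk_reduced hred]
  simp

def ccc : ℕ → FreeGroup (Fin (n + D))
  | 0 => ugadget D hD w D
  | (j + 1) => ⁅ugadget D hD w (D - j - 1), ccc j⁆

theorem ccc_spec (hw : w ≠ 1) :
    ∀ j, j < D →
      (ccc D hD w j).toWord.head? = some (tt (n := n) D hD (D - j), true) ∧
      ∃ r, D - j ≤ r ∧ r ≤ D ∧
        (ccc D hD w j).toWord.getLast? = some (tt (n := n) D hD r, false) := by
  intro j
  induction j with
  | zero =>
    intro _
    have hu := ugadget_toWord D hD w D (Wd_ne_one w hw D hD)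
    have h0 : ccc D hD w 0 = ugadget D hD w D := rfl
    rw [h0, hu]
    refine ⟨by simp, D, by omega, le_refl D, ?_⟩
    exact getLast?_cons_concat _ _ _
  | succ j ih =>
    intro hjD
    have hj : j < D := by omega
    obtain ⟨hhd, r, hr1, hr2, hlt⟩ := ih hj
    have hk1 : 1 ≤ D - j - 1 := by omega
    have hkD : D - j - 1 ≤ D := by omega
    have hb1 : 1 ≤ D - j := by omega
    have hb2 : D - j ≤ D := by omega
    have hne1 : D - j - 1 ≠ D - j := by omega
    have hrb1 : 1 ≤ r := by omega
    have hner : r ≠ D - j - 1 := by omega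
    have hu := ugadget_toWord D hD w (D - j - 1) (Wd_ne_one w hw (D - j - 1) hk1)
    set t := tt (n := n) D hD (D - j - 1) with ht
    set LA := (emb D (Wd w (D - j - 1))).toWord with hLAdef
    set LC := (ccc D hD w j).toWord with hLC
    set Lu := ((t, true) :: LA) ++ [(t, false)] with hLu
    have hLCred : Reduced LC := reduced_toWord _
    have hLCne : LC ≠ [] := by
      intro h
      rw [h] at hhd
      simp at hhd
    have hLune : Lu ≠ [] := by simp [hLu]
    have hLured : Reduced Lu := hu ▸ reduced_toWord _
    have hLuhd : Lu.head? = some (t, true) := by simp [hLu]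
    have hLult : Lu.getLast? = some (t, false) := by
      rw [hLu]
      exact getLast?_cons_concat _ _ _
    have hinvLuhd : (FreeGroup.invRev Lu).head? = some (t, true) := by
      rw [head?_invRev, hLult]
      rfl
    have hinvLult : (FreeGroup.invRev Lu).getLast? = some (t, false) := by
      rw [getLast?_invRev, hLuhd]
      rfl
    have hinvLChd : (FreeGroup.invRev LC).head? = some (tt (n := n) D hD r, true) := by
      rw [head?_invRev, hlt]
      rfl
    have hinvLClt : (FreeGroup.invRev LC).getLast? =
        some (tt (n := n) D hD (D - j), false) := by
      rw [getLast?_invRev, hhd]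
      rfl
    have htne1 : t ≠ tt (n := n) D hD (D - j) :=
      tt_inj (n := n) D hD (a := D - j - 1) (b := D - j) hk1 hkD hb1 hb2 hne1
    have htner : tt (n := n) D hD r ≠ t :=
      tt_inj (n := n) D hD (a := r) (b := D - j - 1) hrb1 hr2 hk1 hkD hner
    have hccc : ccc D hD w (j + 1) =
        FreeGroup.mk ((Lu ++ LC) ++ (FreeGroup.invRev Lu ++ FreeGroup.invRev LC)) := by
      have h1 : ccc D hD w (j + 1) = ⁅ugadget D hD w (D - j - 1), ccc D hD w j⁆ := rfl
      rw [h1, commutatorElement_def]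
      conv_lhs => rw [← FreeGroup.mk_toWord (x := ugadget D hD w (D - j - 1)),
        ← FreeGroup.mk_toWord (x := ccc D hD w j)]
      rw [← hLC, hu, FreeGroup.inv_mk, FreeGroup.inv_mk,
        FreeGroup.mul_mk, FreeGroup.mul_mk, FreeGroup.mul_mk, List.append_assoc (Lu ++ LC)]
    have hR1 : Reduced (Lu ++ LC) := by
      refine reduced_append.mpr ⟨hLured, hLCred, ?_⟩
      intro x hx y hy
      rw [hLult, Option.mem_some_iff] at hx
      rw [hhd, Option.mem_some_iff] at hy
      rw [← hx, ← hy]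
      exact rel_of_fst_ne htne1
    have hR2 : Reduced (FreeGroup.invRev Lu ++ FreeGroup.invRev LC) := by
      refine reduced_append.mpr ⟨reduced_invRev hLured, reduced_invRev hLCred, ?_⟩
      intro x hx y hy
      rw [hinvLult, Option.mem_some_iff] at hx
      rw [hinvLChd, Option.mem_some_iff] at hy
      rw [← hx, ← hy]
      exact rel_of_fst_ne htner.symm
    have hredall : Reduced ((Lu ++ LC) ++ (FreeGroup.invRev Lu ++ FreeGroup.invRev LC)) := by
      refine reduced_append.mpr ⟨hR1, hR2, ?_⟩
      intro x hx y hy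
      rw [List.getLast?_append_of_ne_nil _ hLCne, hlt, Option.mem_some_iff] at hx
      rw [List.head?_append_of_ne_nil _ (invRev_ne_nil hLune), hinvLuhd,
        Option.mem_some_iff] at hy
      rw [← hx, ← hy]
      exact rel_of_fst_ne htner
    rw [hccc, toWord_mk_reduced hredall]
    constructor
    · rw [List.head?_append_of_ne_nil _ (by simp [hLu] : Lu ++ LC ≠ []),
        List.head?_append_of_ne_nil _ hLune, hLuhd]
      rw [show D - (j + 1) = D - j - 1 from (Nat.sub_sub D j 1).symm]
    · refine ⟨D - j, Nat.sub_le_sub_left (Nat.le_succ j) D, Nat.sub_le D j, ?_⟩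
      rw [List.getLast?_append_of_ne_nil _
        (fun h => (invRev_ne_nil hLCne) (List.append_eq_nil_iff.mp h).2),
        List.getLast?_append_of_ne_nil _ (invRev_ne_nil hLCne)]
      exact hinvLClt

theorem ccc_ne_one (hw : w ≠ 1) : ccc D hD w (D - 1) ≠ 1 := by
  obtain ⟨hhd, -⟩ := ccc_spec D hD w hw (D - 1) (by omega)
  intro h
  rw [h, FreeGroup.toWord_one] at hhd
  simp at hhd

theorem ccc_eval_one {G : Type*} [Group G] (f : Fin (n + D) → G) (d : ℕ)
    (hd1 : 1 ≤ d) (hdD : d ≤ D)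
    (hvan : FreeGroup.lift f (ugadget D hD w d) = 1) :
    FreeGroup.lift f (ccc D hD w (D - 1)) = 1 := by
  have base : FreeGroup.lift f (ccc D hD w (D - d)) = 1 := by
    rcases Nat.eq_or_lt_of_le hdD with he | hlt
    · rw [show D - d = 0 from by omega]
      have h0 : ccc D hD w 0 = ugadget D hD w D := rfl
      rw [he] at hvan
      rw [h0]
      exact hvan
    · have h1 : D - d = (D - d - 1) + 1 := by omega
      rw [h1]
      have h2 : ccc D hD w ((D - d - 1) + 1) =
          ⁅ugadget D hD w (D - (D - d - 1) - 1), ccc D hD w (D - d - 1)⁆ := rfl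
      rw [h2, show D - (D - d - 1) - 1 = d from by omega, map_commutatorElement, hvan]
      simp
  have climb : ∀ i, D - d + i ≤ D - 1 → FreeGroup.lift f (ccc D hD w (D - d + i)) = 1 := by
    intro i
    induction i with
    | zero => intro _; simpa using base
    | succ i ih =>
      intro hle
      have h1 : D - d + (i + 1) = (D - d + i) + 1 := by omega
      rw [h1]
      have h2 : ccc D hD w ((D - d + i) + 1) =
          ⁅ugadget D hD w (D - (D - d + i) - 1), ccc D hD w (D - d + i)⁆ := rfl
      rw [h2, map_commutatorElement, ih (by omega)]
      simp
  have hfin := climb (D - 1 - (D - d)) (by omega)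
  rw [show D - d + (D - 1 - (D - d)) = D - 1 from by omega] at hfin
  exact hfin

end Iterate

end NIBD

/-- A group of finite iterational depth with respect to a non-trivial word satisfies a
non-trivial identity. -/
theorem nontrivial_identity_of_bounded_depth (G : Type*) [Group G]
    (n : ℕ) [NeZero n] (w : FreeGroup (Fin n)) (hw : w ≠ 1)
    (D : ℕ) (hD : 1 ≤ D) (h : DepthAtMost w G D) :
    ∃ m : ℕ, 1 ≤ m ∧ ∃ v : FreeGroup (Fin m), v ≠ 1 ∧
      ∀ f : Fin m → G, FreeGroup.lift f v = 1 := by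
  refine ⟨n + D, by omega, NIBD.ccc D hD w (D - 1), NIBD.ccc_ne_one D hD w hw, ?_⟩
  intro f
  obtain ⟨d, hd1, hdD, hiter⟩ := h (f ∘ Fin.castAdd D)
  have hWd : FreeGroup.lift (f ∘ Fin.castAdd D) (NIBD.Wd w d) = 1 := by
    rw [NIBD.Wd, NIBD.lift_iterate]
    exact hiter
  have hvan : FreeGroup.lift f (NIBD.ugadget D hD w d) = 1 := by
    unfold NIBD.ugadget
    rw [_root_.map_mul, _root_.map_mul, _root_.map_inv, NIBD.lift_emb, hWd]
    simp
  exact NIBD.ccc_eval_one D hD w f d hd1 hdD hvan
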